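/- Let f : ℝ^n → ℝ have L-Lipschitz continuous gradient on a convex set containing points x and R_x(η), where ‖R_x(η) − x‖ ≤ p‖η‖ and ‖R_x(η) − x − η‖ ≤ q‖η‖², and suppose ‖∇f(z)‖ ≤ G for all z in the segment. Then f(R_x(η)) ≤ f(x) + ⟨∇f(x), η⟩ + ((L·p² + 2qG)/2)·‖η‖². -/

import Mathlib

/-- Retraction smoothness: if `f` has `L`-Lipschitz gradient on a convex set `s`
containing `x` and the retracted point `Rx = R_x(η)`, with the retraction bounds
`‖Rx − x‖ ≤ p‖η‖` and `‖Rx − x − η‖ ≤ q‖η‖²`, and `‖∇f(z)‖ ≤ G` on the segment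
from `x` to `Rx`, then `f(Rx) ≤ f(x) + ⟨∇f(x), η⟩ + ((L p² + 2 q G)/2)‖η‖²`. -/
theorem stmt_7 (n : ℕ) (f : EuclideanSpace ℝ (Fin n) → ℝ)
    (s : Set (EuclideanSpace ℝ (Fin n))) (hs : Convex ℝ s)
    (L p q G : ℝ) (hL : 0 ≤ L) (hp : 0 < p) (hq : 0 < q) (hG : 0 ≤ G)
    (x η Rx : EuclideanSpace ℝ (Fin n)) (hx : x ∈ s) (hRx : Rx ∈ s)
    (hdiff : ∀ z ∈ s, DifferentiableAt ℝ f z)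
    (hlip : ∀ z ∈ s, ∀ w ∈ s, ‖gradient f z - gradient f w‖ ≤ L * ‖z - w‖)
    (hret1 : ‖Rx - x‖ ≤ p * ‖η‖) (hret2 : ‖Rx - x - η‖ ≤ q * ‖η‖ ^ 2)
    (hgradbd : ∀ z ∈ segment ℝ x Rx, ‖gradient f z‖ ≤ G) :
    f Rx ≤ f x + inner ℝ (gradient f x) η + ((L * p ^ 2 + 2 * q * G) / 2) * ‖η‖ ^ 2 := by
  set v := Rx - x with hv
  have hseg : segment ℝ x Rx ⊆ s := hs.segment_subset hx hRx
  -- membership of line points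
  have hmem : ∀ t ∈ Set.Icc (0:ℝ) 1, x + t • v ∈ segment ℝ x Rx := by
    intro t ht
    rw [segment_eq_image' ℝ x Rx]
    exact ⟨t, ht, rfl⟩
  set g : ℝ → ℝ := fun t => f (x + t • v) - t * (inner ℝ (gradient f x) v : ℝ)
      - L * t ^ 2 * ‖v‖ ^ 2 / 2 with hg
  have hderiv : ∀ t ∈ Set.Icc (0:ℝ) 1, HasDerivAt g
      ((inner ℝ (gradient f (x + t • v)) v : ℝ) - (inner ℝ (gradient f x) v : ℝ)
        - L * t * ‖v‖ ^ 2) t := by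
    intro t ht
    have hz : x + t • v ∈ s := hseg (hmem t ht)
    have hc : HasDerivAt (fun t : ℝ => x + t • v) v t := by
      simpa using ((hasDerivAt_id t).smul_const v).const_add x
    have hf : HasFDerivAt f (InnerProductSpace.toDual ℝ _ (gradient f (x + t • v)))
        (x + t • v) := (hdiff _ hz).hasGradientAt.hasFDerivAt
    have h1 : HasDerivAt (fun t : ℝ => f (x + t • v))
        ((inner ℝ (gradient f (x + t • v)) v : ℝ)) t := by
      have := hf.comp_hasDerivAt t hc
      rw [InnerProductSpace.toDual_apply_apply] at this
      exact this
    have h2 : HasDerivAt (fun t : ℝ => t * (inner ℝ (gradient f x) v : ℝ))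
        ((inner ℝ (gradient f x) v : ℝ)) t := by
      simpa using (hasDerivAt_id t).mul_const _
    have h3 : HasDerivAt (fun t : ℝ => L * t ^ 2 * ‖v‖ ^ 2 / 2)
        (L * t * ‖v‖ ^ 2) t := by
      have := ((hasDerivAt_pow 2 t).const_mul L).mul_const (‖v‖ ^ 2)
      have := this.div_const 2
      refine this.congr_deriv ?_
      norm_num
      ring
    exact (h1.sub h2).sub h3
  have hanti : AntitoneOn g (Set.Icc (0:ℝ) 1) := by
    apply antitoneOn_of_deriv_nonpos (convex_Icc 0 1)
    · exact fun t ht => (hderiv t ht).continuousAt.continuousWithinAt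
    · intro t ht
      rw [interior_Icc] at ht
      exact (hderiv t (Set.mem_Icc_of_Ioo ht)).differentiableAt.differentiableWithinAt
    · intro t ht
      rw [interior_Icc] at ht
      rw [(hderiv t (Set.mem_Icc_of_Ioo ht)).deriv]
      have hz : x + t • v ∈ s := hseg (hmem t (Set.mem_Icc_of_Ioo ht))
      have key : (inner ℝ (gradient f (x + t • v)) v : ℝ) - (inner ℝ (gradient f x) v : ℝ)
          ≤ L * t * ‖v‖ ^ 2 := by
        have h1 : (inner ℝ (gradient f (x + t • v)) v : ℝ) - (inner ℝ (gradient f x) v : ℝ)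
            = inner ℝ (gradient f (x + t • v) - gradient f x) v := by
          rw [inner_sub_left]
        rw [h1]
        calc (inner ℝ (gradient f (x + t • v) - gradient f x) v : ℝ)
            ≤ ‖gradient f (x + t • v) - gradient f x‖ * ‖v‖ := real_inner_le_norm _ _
          _ ≤ (L * ‖(x + t • v) - x‖) * ‖v‖ := by
              apply mul_le_mul_of_nonneg_right (hlip _ hz _ hx) (norm_nonneg _)
          _ = L * t * ‖v‖ ^ 2 := by
              have : ‖(x + t • v) - x‖ = t * ‖v‖ := by
                simp [norm_smul, abs_of_nonneg ht.1.le]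
              rw [this]; ring
      linarith
  have hg10 := hanti (Set.left_mem_Icc.2 zero_le_one) (Set.right_mem_Icc.2 zero_le_one)
    zero_le_one
  have hx1 : x + (1:ℝ) • v = Rx := by simp [hv]
  have hdescent : f Rx ≤ f x + (inner ℝ (gradient f x) v : ℝ) + L / 2 * ‖v‖ ^ 2 := by
    simp only [hg, hx1, one_mul, one_pow, zero_smul, add_zero, zero_mul, zero_pow,
      mul_zero, zero_div, sub_zero] at hg10
    linarith
  -- bound inner ℝ (∇f x) v
  have hGx : ‖gradient f x‖ ≤ G := hgradbd x (left_mem_segment ℝ x Rx)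
  have hsplit : (inner ℝ (gradient f x) v : ℝ)
      ≤ (inner ℝ (gradient f x) η : ℝ) + q * G * ‖η‖ ^ 2 := by
    have h1 : (inner ℝ (gradient f x) v : ℝ)
        = inner ℝ (gradient f x) η + (inner ℝ (gradient f x) (v - η) : ℝ) := by
      rw [← inner_add_right]; congr 1; abel
    rw [h1]
    have h2 : (inner ℝ (gradient f x) (v - η) : ℝ) ≤ ‖gradient f x‖ * ‖v - η‖ :=
      real_inner_le_norm _ _
    have h3 : ‖gradient f x‖ * ‖v - η‖ ≤ G * (q * ‖η‖ ^ 2) :=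
      mul_le_mul hGx hret2 (norm_nonneg _) hG
    nlinarith
  have hvn : ‖v‖ ^ 2 ≤ p ^ 2 * ‖η‖ ^ 2 := by
    nlinarith [norm_nonneg v, norm_nonneg η, mul_nonneg hp.le (norm_nonneg η)]
  nlinarith [mul_le_mul_of_nonneg_left hvn (by linarith : (0:ℝ) ≤ L / 2)]
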